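/- For integers p, q ≥ 1, the function φ(u) = (1/(p+q+1)) · [∫₀¹ y^{q−1}(yu+1)^{−(p+q+1)} dy]/[∫₀¹ y^{q−1}(yu+1)^{−(p+q+2)} dy] satisfies lim_{u→∞} φ(u) = 1/(p+1). -/

import Mathlib

open MeasureTheory Set Filter Topology

private lemma contOnAux (k : ℕ) (m : ℤ) :
    ContinuousOn (fun t : ℝ => t ^ k * (t + 1) ^ m) (Ici (0:ℝ)) :=
  (continuousOn_pow k).mul (((continuousOn_id).add continuousOn_const).zpow₀ m
    (fun x hx => Or.inl (by have : (0:ℝ) ≤ x := hx; show x + 1 ≠ 0; exact ne_of_gt (by linarith))))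

private lemma intAux {k n : ℕ} (h : k + 2 ≤ n) :
    IntegrableOn (fun t : ℝ => t ^ k * (t + 1) ^ (-(n : ℤ))) (Ioi (0:ℝ)) := by
  have h1 : IntegrableOn (fun t : ℝ => t ^ k * (t + 1) ^ (-(n : ℤ))) (Ioc (0:ℝ) 1) :=
    (((contOnAux k (-(n:ℤ))).mono Icc_subset_Ici_self).integrableOn_Icc).mono_set
      Ioc_subset_Icc_self
  have h2 : IntegrableOn (fun t : ℝ => t ^ k * (t + 1) ^ (-(n : ℤ))) (Ioi (1:ℝ)) := by
    refine (integrableOn_Ioi_rpow_of_lt (by norm_num : (-2:ℝ) < -1) one_pos).mono' ?_ ?_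
    · exact ((contOnAux k (-(n:ℤ))).mono (fun x (hx : x ∈ Ioi (1:ℝ)) => (le_of_lt (lt_of_lt_of_le one_pos
        (le_of_lt hx)) : (0:ℝ) ≤ x))).aestronglyMeasurable measurableSet_Ioi
    · filter_upwards [ae_restrict_mem measurableSet_Ioi] with x hx
      have hx1 : (1:ℝ) < x := hx
      have hx0 : (0:ℝ) < x := lt_trans one_pos hx1
      have hnn : 0 ≤ x ^ k * (x + 1) ^ (-(n : ℤ)) := by positivity
      rw [Real.norm_eq_abs, abs_of_nonneg hnn]
      have step1 : (x + 1) ^ (-(n : ℤ)) ≤ x ^ (-(n : ℤ)) := by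
        rw [zpow_neg, zpow_neg, zpow_natCast, zpow_natCast]
        exact inv_anti₀ (by positivity) (pow_le_pow_left₀ (by linarith) (by linarith) n)
      have step2 : x ^ k * (x + 1) ^ (-(n : ℤ)) ≤ x ^ ((k:ℤ) - n) := by
        calc x ^ k * (x + 1) ^ (-(n : ℤ)) ≤ x ^ k * x ^ (-(n : ℤ)) := by
              exact mul_le_mul_of_nonneg_left step1 (by positivity)
          _ = x ^ ((k:ℤ) - n) := by
              rw [← zpow_natCast x k, ← zpow_add₀ hx0.ne']; ring_nf
      have step3 : x ^ ((k:ℤ) - n) ≤ x ^ (-2 : ℤ) :=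
        zpow_le_zpow_right₀ (le_of_lt hx1) (by omega)
      calc x ^ k * (x + 1) ^ (-(n : ℤ)) ≤ x ^ (-2 : ℤ) := le_trans step2 step3
        _ = x ^ (-2 : ℝ) := by
            rw [← Real.rpow_intCast x (-2)]; norm_num
  exact (h1.union h2).mono_set (fun x hx => by
    rcases le_or_gt x 1 with h' | h'
    · exact Or.inl ⟨hx, h'⟩
    · exact Or.inr h')

private lemma posAux {k n : ℕ} (h : k + 2 ≤ n) :
    0 < ∫ t in Ioi (0:ℝ), t ^ k * (t + 1) ^ (-(n : ℤ)) := by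
  rw [setIntegral_pos_iff_support_of_nonneg_ae ?_ (intAux h)]
  · have hsub : Ioi (0:ℝ) ⊆ Function.support (fun t : ℝ => t ^ k * (t + 1) ^ (-(n : ℤ))) := by
      intro x hx
      have hx0 : (0:ℝ) < x := hx
      have : 0 < x ^ k * (x + 1) ^ (-(n : ℤ)) := by positivity
      exact ne_of_gt this
    rw [Set.inter_eq_self_of_subset_right hsub, Real.volume_Ioi]
    exact ENNReal.zero_lt_top
  · filter_upwards [ae_restrict_mem measurableSet_Ioi] with x hx
    have hx0 : (0:ℝ) < x := hx
    positivity

private lemma keyAux (p q : ℕ) (hq : 1 ≤ q) :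
    ((p:ℝ) + 1) * (∫ t in Ioi (0:ℝ), t ^ (q-1) * (t + 1) ^ (-((p+q+1 : ℕ) : ℤ)))
      = ((p:ℝ) + q + 1) *
        (∫ t in Ioi (0:ℝ), t ^ (q-1) * (t + 1) ^ (-((p+q+2 : ℕ) : ℤ))) := by
  set N : ℕ := p + q + 1 with hN
  have hq1 : q - 1 + 1 = q := Nat.succ_pred_eq_of_pos hq
  -- IBP ingredients
  set F : ℝ → ℝ := fun t => t ^ q * (t + 1) ^ (-(N:ℤ)) with hF
  set F' : ℝ → ℝ := fun t =>
    (q:ℝ) * (t ^ (q-1) * (t + 1) ^ (-(N:ℤ))) +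
      (-(N:ℝ)) * (t ^ q * (t + 1) ^ (-((N+1 : ℕ):ℤ))) with hF'
  have hderiv : ∀ x ∈ Ioi (0:ℝ), HasDerivAt F (F' x) x := by
    intro x hx
    have hx0 : (0:ℝ) < x := hx
    have hx1 : x + 1 ≠ 0 := by linarith
    have h1 : HasDerivAt (fun t : ℝ => t ^ q) ((q:ℝ) * x ^ (q-1)) x := hasDerivAt_pow q x
    have h2 : HasDerivAt (fun t : ℝ => (t + 1) ^ (-(N:ℤ)))
        (((-(N:ℤ)):ℝ) * (x + 1) ^ (-(N:ℤ) - 1) * 1) x := by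
      have := (hasDerivAt_zpow (-(N:ℤ)) (x+1) (Or.inl hx1)).comp x ((hasDerivAt_id x).add_const 1)
      simpa [Function.comp_def] using this
    have := h1.mul h2
    refine this.congr_deriv ?_
    simp only [hF', mul_one]
    have : (-(N:ℤ) - 1) = -((N+1 : ℕ):ℤ) := by push_cast; ring
    rw [this]
    push_cast
    ring
  have hcont : ContinuousWithinAt F (Ici (0:ℝ)) 0 :=
    (contOnAux q (-(N:ℤ))).continuousWithinAt self_mem_Ici
  have htend : Tendsto F atTop (𝓝 0) := by
    apply squeeze_zero' (g := fun x : ℝ => (x + 1) ^ ((q:ℤ) - N))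
    · filter_upwards [eventually_ge_atTop (0:ℝ)] with x hx
      have : (0:ℝ) < x + 1 := by linarith
      simp only [hF]; positivity
    · filter_upwards [eventually_ge_atTop (0:ℝ)] with x hx
      have hx1 : (0:ℝ) < x + 1 := by linarith
      have : x ^ q ≤ (x + 1) ^ q := pow_le_pow_left₀ hx (by linarith) q
      calc F x ≤ (x+1) ^ q * (x + 1) ^ (-(N:ℤ)) := by
            simp only [hF]
            exact mul_le_mul_of_nonneg_right this (by positivity)
        _ = (x + 1) ^ ((q:ℤ) - N) := by
            rw [← zpow_natCast (x+1) q, ← zpow_add₀ hx1.ne']; ring_nf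
    · have hlim : Tendsto (fun y : ℝ => y ^ ((q:ℤ) - N)) atTop (𝓝 0) :=
        tendsto_zpow_atTop_zero (by omega)
      exact hlim.comp (tendsto_atTop_add_const_right _ 1 tendsto_id)
  have hi1 : IntegrableOn (fun t : ℝ => t ^ (q-1) * (t + 1) ^ (-(N:ℤ))) (Ioi (0:ℝ)) :=
    intAux (by omega)
  have hi2 : IntegrableOn (fun t : ℝ => t ^ q * (t + 1) ^ (-((N+1 : ℕ):ℤ))) (Ioi (0:ℝ)) :=
    intAux (by omega)
  have hi2' : IntegrableOn (fun t : ℝ => t ^ (q-1) * (t + 1) ^ (-((N+1 : ℕ):ℤ))) (Ioi (0:ℝ)) :=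
    intAux (by omega)
  have f'int : IntegrableOn F' (Ioi (0:ℝ)) := (hi1.const_mul _).add (hi2.const_mul _)
  have hIBP : ∫ x in Ioi (0:ℝ), F' x = 0 - F 0 :=
    integral_Ioi_of_hasDerivAt_of_tendsto hcont hderiv f'int htend
  have hF0 : F 0 = 0 := by
    simp only [hF]
    rw [zero_pow (by omega)]
    ring
  rw [hF0, sub_zero] at hIBP
  have hsplitInt : ∫ x in Ioi (0:ℝ), F' x
      = (q:ℝ) * (∫ t in Ioi (0:ℝ), t ^ (q-1) * (t + 1) ^ (-(N:ℤ)))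
        + (-(N:ℝ)) * (∫ t in Ioi (0:ℝ), t ^ q * (t + 1) ^ (-((N+1 : ℕ):ℤ))) := by
    rw [integral_add (hi1.const_mul _) (hi2.const_mul _), integral_const_mul, integral_const_mul]
  -- split relation L1 = L2 + M
  have hptwise : ∀ t ∈ Ioi (0:ℝ), t ^ (q-1) * (t + 1) ^ (-(N:ℤ))
      = t ^ (q-1) * (t + 1) ^ (-((N+1 : ℕ):ℤ)) + t ^ q * (t + 1) ^ (-((N+1 : ℕ):ℤ)) := by
    intro t ht
    have ht0 : (0:ℝ) < t := ht
    have ht1 : t + 1 ≠ 0 := by linarith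
    have hz : (t + 1) ^ (-(N:ℤ)) = (t + 1) ^ (-((N+1 : ℕ):ℤ)) * (t + 1) := by
      rw [← zpow_add_one₀ ht1]
      norm_num
    rw [hz]
    have htq : t ^ q = t ^ (q-1) * t := by rw [← pow_succ, hq1]
    rw [htq]; ring
  have hsplit : (∫ t in Ioi (0:ℝ), t ^ (q-1) * (t + 1) ^ (-(N:ℤ)))
      = (∫ t in Ioi (0:ℝ), t ^ (q-1) * (t + 1) ^ (-((N+1 : ℕ):ℤ)))
        + (∫ t in Ioi (0:ℝ), t ^ q * (t + 1) ^ (-((N+1 : ℕ):ℤ))) := by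
    rw [setIntegral_congr_fun measurableSet_Ioi hptwise, integral_add hi2' hi2]
  -- assemble
  have hM : (q:ℝ) * (∫ t in Ioi (0:ℝ), t ^ (q-1) * (t + 1) ^ (-(N:ℤ)))
      = (N:ℝ) * (∫ t in Ioi (0:ℝ), t ^ q * (t + 1) ^ (-((N+1 : ℕ):ℤ))) := by
    rw [hsplitInt] at hIBP; linarith
  have hNc : ((N:ℝ)) = (p:ℝ) + q + 1 := by push_cast [hN]; ring
  have hN2 : ((p+q+2 : ℕ) : ℤ) = ((N+1 : ℕ) : ℤ) := by push_cast [hN]; ring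
  have hN1 : ((p+q+1 : ℕ) : ℤ) = ((N : ℕ) : ℤ) := by push_cast [hN]; ring
  rw [hN1, hN2]
  set L1 := ∫ t in Ioi (0:ℝ), t ^ (q-1) * (t + 1) ^ (-(N:ℤ)) with hL1
  set L2 := ∫ t in Ioi (0:ℝ), t ^ (q-1) * (t + 1) ^ (-((N+1 : ℕ):ℤ))
  set M := ∫ t in Ioi (0:ℝ), t ^ q * (t + 1) ^ (-((N+1 : ℕ):ℤ))
  have hq' : (1:ℝ) ≤ (q:ℝ) := by exact_mod_cast hq
  rw [← hNc]
  -- hM : q * L1 = N * M, hsplit : L1 = L2 + M, N = p+q+1 so p+1 = N - q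
  have : ((p:ℝ) + 1) = (N:ℝ) - q := by rw [hNc]; ring
  rw [this]
  nlinarith [hM, hsplit]

private lemma substAux (k : ℕ) (m : ℤ) {u : ℝ} (hu : 0 < u) :
    (∫ y in Ioo (0:ℝ) 1, y ^ k * (y * u + 1) ^ m)
      = (u ^ (k+1))⁻¹ * ∫ t in (0:ℝ)..u, t ^ k * (t + 1) ^ m := by
  have h1 : ∀ y : ℝ, y ^ k * (y * u + 1) ^ m
      = (u ^ k)⁻¹ * ((fun t : ℝ => t ^ k * (t + 1) ^ m) (y * u)) := by
    intro y
    simp only [mul_pow]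
    field_simp
  calc (∫ y in Ioo (0:ℝ) 1, y ^ k * (y * u + 1) ^ m)
      = ∫ y in (0:ℝ)..1, y ^ k * (y * u + 1) ^ m := by
        rw [intervalIntegral.integral_of_le zero_le_one, integral_Ioc_eq_integral_Ioo]
    _ = ∫ y in (0:ℝ)..1, (u ^ k)⁻¹ * ((fun t : ℝ => t ^ k * (t + 1) ^ m) (y * u)) := by
        simp_rw [h1]
    _ = (u ^ k)⁻¹ * ∫ y in (0:ℝ)..1, (fun t : ℝ => t ^ k * (t + 1) ^ m) (y * u) :=
        intervalIntegral.integral_const_mul _ _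
    _ = (u ^ k)⁻¹ * (u⁻¹ • ∫ t in (0:ℝ)*u..1*u, t ^ k * (t + 1) ^ m) := by
        rw [intervalIntegral.integral_comp_mul_right (fun t : ℝ => t ^ k * (t + 1) ^ m) hu.ne']
    _ = (u ^ (k+1))⁻¹ * ∫ t in (0:ℝ)..u, t ^ k * (t + 1) ^ m := by
        rw [zero_mul, one_mul, smul_eq_mul, pow_succ, mul_inv]
        ring

theorem stmt9 (p q : ℕ) (hp : 1 ≤ p) (hq : 1 ≤ q)
    (φ : ℝ → ℝ)
    (hφ : ∀ u : ℝ, φ u = (1 / ((p : ℝ) + q + 1)) *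
      (∫ y in Set.Ioo (0 : ℝ) 1, y ^ (q - 1) * (y * u + 1) ^ (-((p : ℤ) + q + 1))) /
      (∫ y in Set.Ioo (0 : ℝ) 1, y ^ (q - 1) * (y * u + 1) ^ (-((p : ℤ) + q + 2)))) :
    Tendsto φ atTop (nhds (1 / ((p : ℝ) + 1))) := by
  have hc1 : -((p:ℤ) + q + 1) = -((p+q+1 : ℕ) : ℤ) := by push_cast; ring
  have hc2 : -((p:ℤ) + q + 2) = -((p+q+2 : ℕ) : ℤ) := by push_cast; ring
  set L1 := ∫ t in Ioi (0:ℝ), t ^ (q-1) * (t + 1) ^ (-((p+q+1 : ℕ) : ℤ)) with hL1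
  set L2 := ∫ t in Ioi (0:ℝ), t ^ (q-1) * (t + 1) ^ (-((p+q+2 : ℕ) : ℤ)) with hL2
  have hi1 : IntegrableOn (fun t : ℝ => t ^ (q-1) * (t + 1) ^ (-((p+q+1 : ℕ) : ℤ)))
      (Ioi (0:ℝ)) := intAux (by omega)
  have hi2 : IntegrableOn (fun t : ℝ => t ^ (q-1) * (t + 1) ^ (-((p+q+2 : ℕ) : ℤ)))
      (Ioi (0:ℝ)) := intAux (by omega)
  have hL2pos : 0 < L2 := posAux (by omega)
  have hkey := keyAux p q hq
  have hT1 : Tendsto (fun u : ℝ => ∫ t in (0:ℝ)..u, t ^ (q-1) * (t + 1) ^ (-((p+q+1 : ℕ) : ℤ)))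
      atTop (𝓝 L1) := intervalIntegral_tendsto_integral_Ioi 0 hi1 tendsto_id
  have hT2 : Tendsto (fun u : ℝ => ∫ t in (0:ℝ)..u, t ^ (q-1) * (t + 1) ^ (-((p+q+2 : ℕ) : ℤ)))
      atTop (𝓝 L2) := intervalIntegral_tendsto_integral_Ioi 0 hi2 tendsto_id
  have hpq : ((p:ℝ) + q + 1) ≠ 0 := by positivity
  have hp1 : ((p:ℝ) + 1) ≠ 0 := by positivity
  have hT : Tendsto (fun u : ℝ =>
      (1 / ((p:ℝ) + q + 1)) * (∫ t in (0:ℝ)..u, t ^ (q-1) * (t + 1) ^ (-((p+q+1 : ℕ) : ℤ)))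
        / (∫ t in (0:ℝ)..u, t ^ (q-1) * (t + 1) ^ (-((p+q+2 : ℕ) : ℤ))))
      atTop (𝓝 ((1 / ((p:ℝ) + q + 1)) * L1 / L2)) :=
    (hT1.const_mul _).div hT2 hL2pos.ne'
  have hval : (1 / ((p:ℝ) + q + 1)) * L1 / L2 = 1 / ((p:ℝ) + 1) := by
    field_simp
    linarith [hkey]
  rw [← hval]
  apply hT.congr'
  filter_upwards [eventually_gt_atTop (0:ℝ)] with u hu
  rw [hφ u]
  simp only [hc1, hc2]
  rw [substAux (q-1) _ hu, substAux (q-1) _ hu]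
  have ha : ((u:ℝ) ^ (q-1+1))⁻¹ ≠ 0 := by positivity
  rw [show (1 / ((p:ℝ) + q + 1)) * ((u ^ (q-1+1))⁻¹ *
      (∫ t in (0:ℝ)..u, t ^ (q-1) * (t + 1) ^ (-((p+q+1 : ℕ) : ℤ))))
    = (u ^ (q-1+1))⁻¹ * ((1 / ((p:ℝ) + q + 1)) *
      (∫ t in (0:ℝ)..u, t ^ (q-1) * (t + 1) ^ (-((p+q+1 : ℕ) : ℤ)))) from by ring,
    mul_div_mul_left _ _ ha]
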